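/- Let u* minimize L(u) = ‖Aᵀu‖₁ + uᵀy + ‖u‖²/2 over u ∈ ℝⁿ, and let ũ* minimize L̃(u) = L(u) + |aᵀu| - aᵀu·β for a vector a ∈ ℝⁿ and β ∈ {-1,1}. Then ‖u* - ũ*‖ ≤ 2‖a‖. -/

import Mathlib

open Real Finset

section Aux

variable {E : Type*} [NormedAddCommGroup E] [InnerProductSpace ℝ E]

lemma norm_combo_sq (x v : E) (t : ℝ) :
    ‖(1 - t) • x + t • v‖ ^ 2 =
      (1 - t) * ‖x‖ ^ 2 + t * ‖v‖ ^ 2 - t * (1 - t) * ‖x - v‖ ^ 2 := by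
  have h1 : ‖(1 - t) • x + t • v‖ ^ 2 = (inner ℝ ((1-t) • x + t • v) ((1-t) • x + t • v) : ℝ) :=
    (real_inner_self_eq_norm_sq _).symm
  have h2 : ‖x‖ ^ 2 = (inner ℝ x x : ℝ) := (real_inner_self_eq_norm_sq _).symm
  have h3 : ‖v‖ ^ 2 = (inner ℝ v v : ℝ) := (real_inner_self_eq_norm_sq _).symm
  have h4 : ‖x - v‖ ^ 2 = (inner ℝ (x - v) (x - v) : ℝ) := (real_inner_self_eq_norm_sq _).symm
  rw [h1, h2, h3, h4]
  simp only [inner_add_add_self, inner_sub_sub_self, real_inner_smul_left,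
    real_inner_smul_right]
  ring

/-- Minimizer gap for g + ‖·‖²/2 with g convex. -/
lemma strong_min (g : E → ℝ)
    (hg : ∀ x v : E, ∀ t : ℝ, 0 ≤ t → t ≤ 1 →
      g ((1 - t) • x + t • v) ≤ (1 - t) * g x + t * g v)
    (u : E) (hu : ∀ w : E, g u + ‖u‖ ^ 2 / 2 ≤ g w + ‖w‖ ^ 2 / 2) (v : E) :
    g u + ‖u‖ ^ 2 / 2 + ‖u - v‖ ^ 2 / 2 ≤ g v + ‖v‖ ^ 2 / 2 := by
  have key : ∀ t : ℝ, 0 < t → t ≤ 1 →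
      (1 - t) / 2 * ‖u - v‖ ^ 2 ≤ (g v + ‖v‖ ^ 2 / 2) - (g u + ‖u‖ ^ 2 / 2) := by
    intro t ht0 ht1
    have h1 := hu ((1 - t) • u + t • v)
    have h2 := hg u v t ht0.le ht1
    have h3 := norm_combo_sq u v t
    have h4 : t * ((1 - t) / 2 * ‖u - v‖ ^ 2) ≤
        t * ((g v + ‖v‖ ^ 2 / 2) - (g u + ‖u‖ ^ 2 / 2)) := by nlinarith
    exact (mul_le_mul_iff_right₀ ht0).mp h4
  have hd : (0:ℝ) ≤ ‖u - v‖ ^ 2 := by positivity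
  refine le_of_forall_pos_le_add ?_
  intro ε hε
  set d := ‖u - v‖ ^ 2 with hdd
  set t : ℝ := min 1 (ε / (d + 1)) with htdef
  have ht0 : 0 < t := lt_min one_pos (by positivity)
  have ht1 : t ≤ 1 := min_le_left _ _
  have htd : t * d ≤ 2 * ε := by
    have h5 : t ≤ ε / (d + 1) := min_le_right _ _
    have h6 : t * d ≤ (ε / (d + 1)) * d := by nlinarith
    have h7 : (ε / (d + 1)) * d ≤ ε := by
      rw [div_mul_eq_mul_div, div_le_iff₀ (by positivity)]
      nlinarith
    linarith
  have := key t ht0 ht1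
  nlinarith

end Aux

theorem leave_one_out_perturbation (n m : ℕ)
    (A : Fin m → EuclideanSpace ℝ (Fin n))
    (y a : EuclideanSpace ℝ (Fin n)) (β : ℝ) (hβ : β = 1 ∨ β = -1)
    (L Lt : EuclideanSpace ℝ (Fin n) → ℝ)
    (hL : ∀ u, L u = (∑ j, |(inner ℝ (A j) u : ℝ)|) + (inner ℝ u y : ℝ) + ‖u‖ ^ 2 / 2)
    (hLt : ∀ u, Lt u = L u + |(inner ℝ a u : ℝ)| - (inner ℝ a u : ℝ) * β)
    (ustar utilde : EuclideanSpace ℝ (Fin n))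
    (hustar : IsMinOn L Set.univ ustar)
    (hutilde : IsMinOn Lt Set.univ utilde) :
    ‖ustar - utilde‖ ≤ 2 * ‖a‖ := by
  -- the convex parts
  obtain ⟨g1, hg1⟩ : ∃ g : EuclideanSpace ℝ (Fin n) → ℝ,
      ∀ u, g u = (∑ j, |(inner ℝ (A j) u : ℝ)|) + (inner ℝ u y : ℝ) := ⟨_, fun _ => rfl⟩
  obtain ⟨g2, hg2⟩ : ∃ g : EuclideanSpace ℝ (Fin n) → ℝ,
      ∀ u, g u = g1 u + |(inner ℝ a u : ℝ)| - (inner ℝ a u : ℝ) * β := ⟨_, fun _ => rfl⟩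
  have hLg : ∀ u, L u = g1 u + ‖u‖ ^ 2 / 2 := by
    intro u; rw [hL, hg1]
  have hLtg : ∀ u, Lt u = g2 u + ‖u‖ ^ 2 / 2 := by
    intro u; rw [hLt, hLg, hg2]; ring
  -- convexity of g1
  have hcvx1 : ∀ x v : EuclideanSpace ℝ (Fin n), ∀ t : ℝ, 0 ≤ t → t ≤ 1 →
      g1 ((1 - t) • x + t • v) ≤ (1 - t) * g1 x + t * g1 v := by
    intro x v t ht0 ht1
    have h1t : (0:ℝ) ≤ 1 - t := by linarith
    rw [hg1, hg1, hg1]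
    have hsum : ∀ j, |(inner ℝ (A j) ((1 - t) • x + t • v) : ℝ)| ≤
        (1 - t) * |(inner ℝ (A j) x : ℝ)| + t * |(inner ℝ (A j) v : ℝ)| := by
      intro j
      rw [inner_add_right, real_inner_smul_right, real_inner_smul_right]
      calc |(1 - t) * (inner ℝ (A j) x : ℝ) + t * (inner ℝ (A j) v : ℝ)|
          ≤ |(1 - t) * (inner ℝ (A j) x : ℝ)| + |t * (inner ℝ (A j) v : ℝ)| := abs_add_le _ _
        _ = (1 - t) * |(inner ℝ (A j) x : ℝ)| + t * |(inner ℝ (A j) v : ℝ)| := by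
            rw [abs_mul, abs_mul, abs_of_nonneg h1t, abs_of_nonneg ht0]
    have hlin : (inner ℝ ((1 - t) • x + t • v) y : ℝ) =
        (1 - t) * (inner ℝ x y : ℝ) + t * (inner ℝ v y : ℝ) := by
      rw [inner_add_left, real_inner_smul_left, real_inner_smul_left]
    calc (∑ j, |(inner ℝ (A j) ((1 - t) • x + t • v) : ℝ)|) + (inner ℝ ((1 - t) • x + t • v) y : ℝ)
        ≤ (∑ j, ((1 - t) * |(inner ℝ (A j) x : ℝ)| + t * |(inner ℝ (A j) v : ℝ)|))
          + ((1 - t) * (inner ℝ x y : ℝ) + t * (inner ℝ v y : ℝ)) := by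
          exact add_le_add (Finset.sum_le_sum fun j _ => hsum j) (le_of_eq hlin)
      _ = (1 - t) * ((∑ j, |(inner ℝ (A j) x : ℝ)|) + (inner ℝ x y : ℝ))
          + t * ((∑ j, |(inner ℝ (A j) v : ℝ)|) + (inner ℝ v y : ℝ)) := by
          rw [Finset.sum_add_distrib, ← Finset.mul_sum, ← Finset.mul_sum]; ring
  have hcvx2 : ∀ x v : EuclideanSpace ℝ (Fin n), ∀ t : ℝ, 0 ≤ t → t ≤ 1 →
      g2 ((1 - t) • x + t • v) ≤ (1 - t) * g2 x + t * g2 v := by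
    intro x v t ht0 ht1
    have h1t : (0:ℝ) ≤ 1 - t := by linarith
    have hin : (inner ℝ a ((1 - t) • x + t • v) : ℝ) =
        (1 - t) * (inner ℝ a x : ℝ) + t * (inner ℝ a v : ℝ) := by
      rw [inner_add_right, real_inner_smul_right, real_inner_smul_right]
    have habs : |(inner ℝ a ((1 - t) • x + t • v) : ℝ)| ≤
        (1 - t) * |(inner ℝ a x : ℝ)| + t * |(inner ℝ a v : ℝ)| := by
      rw [hin]
      calc |(1 - t) * (inner ℝ a x : ℝ) + t * (inner ℝ a v : ℝ)|
          ≤ |(1 - t) * (inner ℝ a x : ℝ)| + |t * (inner ℝ a v : ℝ)| := abs_add_le _ _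
        _ = (1 - t) * |(inner ℝ a x : ℝ)| + t * |(inner ℝ a v : ℝ)| := by
            rw [abs_mul, abs_mul, abs_of_nonneg h1t, abs_of_nonneg ht0]
    have h1 := hcvx1 x v t ht0 ht1
    rw [hin] at habs
    rw [hg2, hg2, hg2, hin]
    nlinarith [h1, habs]
  -- minimizer facts
  have hmin1 : ∀ w : EuclideanSpace ℝ (Fin n), g1 ustar + ‖ustar‖ ^ 2 / 2 ≤ g1 w + ‖w‖ ^ 2 / 2 := by
    intro w
    have := isMinOn_iff.mp hustar w (Set.mem_univ w)
    rw [hLg, hLg] at this; exact this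
  have hmin2 : ∀ w : EuclideanSpace ℝ (Fin n), g2 utilde + ‖utilde‖ ^ 2 / 2 ≤ g2 w + ‖w‖ ^ 2 / 2 := by
    intro w
    have := isMinOn_iff.mp hutilde w (Set.mem_univ w)
    rw [hLtg, hLtg] at this; exact this
  have H1 : g1 ustar + ‖ustar‖ ^ 2 / 2 + ‖ustar - utilde‖ ^ 2 / 2 ≤ g1 utilde + ‖utilde‖ ^ 2 / 2 :=
    strong_min g1 hcvx1 ustar hmin1 utilde
  have H2 : g2 utilde + ‖utilde‖ ^ 2 / 2 + ‖utilde - ustar‖ ^ 2 / 2 ≤ g2 ustar + ‖ustar‖ ^ 2 / 2 :=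
    strong_min g2 hcvx2 utilde hmin2 ustar
  -- combine
  have hns : ‖utilde - ustar‖ = ‖ustar - utilde‖ := norm_sub_rev _ _
  rw [hns] at H2
  have hsum : ‖ustar - utilde‖ ^ 2 ≤ g2 ustar - g1 ustar - (g2 utilde - g1 utilde) := by
    have H3 := add_le_add H1 H2
    linarith [H3]
  set s : ℝ := (inner ℝ a ustar : ℝ)
  set tt : ℝ := (inner ℝ a utilde : ℝ)
  have hdiff : g2 ustar - g1 ustar - (g2 utilde - g1 utilde)
      = (|s| - s * β) - (|tt| - tt * β) := by
    rw [hg2, hg2]; ring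
  have hst : s - tt = (inner ℝ a (ustar - utilde) : ℝ) := by
    rw [inner_sub_right]
  have hcs : |(inner ℝ a (ustar - utilde) : ℝ)| ≤ ‖a‖ * ‖ustar - utilde‖ :=
    abs_real_inner_le_norm _ _
  have hlip : (|s| - s * β) - (|tt| - tt * β) ≤ 2 * |s - tt| := by
    rcases hβ with hb | hb <;> subst hb <;>
      cases abs_cases s <;> cases abs_cases tt <;> cases abs_cases (s - tt) <;> linarith
  have hfin : ‖ustar - utilde‖ ^ 2 ≤ 2 * (‖a‖ * ‖ustar - utilde‖) := by
    rw [hdiff] at hsum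
    calc ‖ustar - utilde‖ ^ 2 ≤ (|s| - s * β) - (|tt| - tt * β) := hsum
      _ ≤ 2 * |s - tt| := hlip
      _ ≤ 2 * (‖a‖ * ‖ustar - utilde‖) := by rw [hst]; linarith [hcs]
  nlinarith [norm_nonneg (ustar - utilde), norm_nonneg a, hfin]
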